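/- Every read-write dependency is preserved by every reordering: if t1 →rw t2 holds with respect to the original commit timestamps (where t1 and t2 are each committed or pending with respect to M), then t1 →rw t2 holds with respect to the new commit timestamps assigned by any reordering ρ. -/

import Mathlib

/-- A timestamp is a pair `(m, p)` of naturals, ordered lexicographically. -/
abbrev Timestamp : Type := ℕ ×ₗ ℕ

/-- A transaction: a start timestamp of the form `(m, 0)`, a commit timestamp
`(M, q)` with `q ≥ 1` and `start ≤ (M, 0)`, a finite read set of key/version
pairs with versions at most the start timestamp, and a finite write set of keys. -/
structure Txn (Key : Type) where
  startTS : Timestamp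
  commitTS : Timestamp
  start_snd : (ofLex startTS).2 = 0
  commit_pos : 1 ≤ (ofLex commitTS).2
  start_le : startTS ≤ toLex ((ofLex commitTS).1, 0)
  reads : Finset (Key × Timestamp)
  writes : Finset Key
  reads_snapshot : ∀ kv ∈ reads, kv.2 ≤ startTS

/-- Concurrency of two transactions with respect to a commit-timestamp assignment `C`. -/
def ConcurrentWith {Key : Type} (C : Txn Key → Timestamp) (t1 t2 : Txn Key) : Prop :=
  (C t1 < C t2 → t2.startTS < C t1) ∧ (C t2 < C t1 → t1.startTS < C t2)

/-- Concurrency with respect to the original commit timestamps. -/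
def Concurrent {Key : Type} (t1 t2 : Txn Key) : Prop :=
  ConcurrentWith (fun t => t.commitTS) t1 t2

/-- Write-write dependency `t1 →ww t2` w.r.t. commit assignment `C`. -/
def wwC {Key : Type} (C : Txn Key → Timestamp) (t1 t2 : Txn Key) : Prop :=
  t1 ≠ t2 ∧ (∃ k, k ∈ t1.writes ∧ k ∈ t2.writes) ∧ C t1 < C t2

/-- Write-read dependency `t1 →wr t2` w.r.t. commit assignment `C`. -/
def wrC {Key : Type} (C : Txn Key → Timestamp) (t1 t2 : Txn Key) : Prop :=
  t1 ≠ t2 ∧ ∃ kv ∈ t2.reads, kv.1 ∈ t1.writes ∧ kv.2 = C t1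

/-- Read-write dependency `t1 →rw t2` w.r.t. commit assignment `C`. -/
def rwC {Key : Type} (C : Txn Key → Timestamp) (t1 t2 : Txn Key) : Prop :=
  t1 ≠ t2 ∧ ∃ kv ∈ t1.reads, kv.1 ∈ t2.writes ∧ kv.2 < C t2

/-- The dependency relation: union of ww, wr and rw. -/
def depC {Key : Type} (C : Txn Key → Timestamp) (t1 t2 : Txn Key) : Prop :=
  wwC C t1 t2 ∨ wrC C t1 t2 ∨ rwC C t1 t2

/-- `t` is committed with respect to the next block number `M`. -/
def Committed {Key : Type} (M : ℕ) (t : Txn Key) : Prop :=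
  (ofLex t.commitTS).1 < M

/-- `t` is pending with respect to the next block number `M`:
its commit timestamp is `(M, p)` (with `p ≥ 1` automatic). -/
def Pending {Key : Type} (M : ℕ) (t : Txn Key) : Prop :=
  (ofLex t.commitTS).1 = M

/-- A reordering of the transactions in `T`: it assigns to each pending
transaction a new commit timestamp `(M, p')` with `p' ≥ 1`, injectively on `T`,
leaving committed transactions' commit timestamps (and, implicitly, all start
timestamps, read sets and write sets) unchanged. -/
structure Reordering {Key : Type} (M : ℕ) (T : Finset (Txn Key)) where
  newCommit : Txn Key → Timestamp
  fix_committed : ∀ t ∈ T, Committed M t → newCommit t = t.commitTS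
  pending_block : ∀ t ∈ T, Pending M t → (ofLex (newCommit t)).1 = M
  pending_pos : ∀ t ∈ T, Pending M t → 1 ≤ (ofLex (newCommit t)).2
  inj : ∀ t ∈ T, ∀ u ∈ T, newCommit t = newCommit u → t = u

/-- every read-write dependency is preserved by every reordering:
if `t1 →rw t2` w.r.t. the original commit timestamps (with `t1, t2 ∈ T` each
committed or pending w.r.t. `M`), then `t1 →rw t2` w.r.t. the new commit
timestamps assigned by any reordering `ρ` of `T`. -/
theorem reorder_preserves_rw {Key : Type} (M : ℕ) (T : Finset (Txn Key))
    (ρ : Reordering M T) (t1 t2 : Txn Key) (h1 : t1 ∈ T) (h2 : t2 ∈ T)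
    (hcp1 : Committed M t1 ∨ Pending M t1) (hcp2 : Committed M t2 ∨ Pending M t2)
    (hrw : rwC (fun x => x.commitTS) t1 t2) :
    rwC ρ.newCommit t1 t2 := by
  obtain ⟨hne, kv, hkv, hw, hlt⟩ := hrw
  refine ⟨hne, kv, hkv, hw, ?_⟩
  rcases hcp2 with hc2 | hp2
  · rw [ρ.fix_committed t2 h2 hc2]; exact hlt
  · -- t2 pending: kv.2 < (M, q); show kv.2 < newCommit t2 = (M, p'), p' ≥ 1
    have hb2 := ρ.pending_block t2 h2 hp2
    have hp2' := ρ.pending_pos t2 h2 hp2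
    have hsnap := t1.reads_snapshot kv hkv
    obtain ⟨a, b⟩ := id (ofLex kv.2)
    have hkveq : kv.2 = toLex ((ofLex kv.2).1, (ofLex kv.2).2) := rfl
    have goal : toLex (ofLex kv.2) < toLex (ofLex (ρ.newCommit t2)) → kv.2 < ρ.newCommit t2 := fun h => h
    apply goal
    rw [Prod.Lex.lt_iff]; simp only [ofLex_toLex]
    -- cases on whether (ofLex kv.2).1 < M or = M
    have hltM : (ofLex kv.2).1 ≤ M := by
      have : toLex (ofLex kv.2) < toLex (ofLex t2.commitTS) := hlt
      rw [Prod.Lex.lt_iff] at this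
      rcases this with h | ⟨h, _⟩
      · exact le_of_lt (hp2 ▸ h)
      · exact le_of_eq (hp2 ▸ h)
    rcases lt_or_eq_of_le hltM with h | h
    · left; rw [hb2]; exact h
    · right
      refine ⟨h.trans hb2.symm, ?_⟩
      -- kv.2 ≤ startTS t1 = (m1, 0), m1 ≤ M, so (ofLex kv.2).2 = 0 < p'
      have hm1 : (ofLex t1.startTS).1 ≤ M := by
        have hle : toLex (ofLex t1.startTS) ≤ toLex ((ofLex t1.commitTS).1, 0) := t1.start_le
        rw [Prod.Lex.le_iff] at hle
        have hM1 : (ofLex t1.commitTS).1 ≤ M := by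
          rcases hcp1 with hc | hp
          · exact le_of_lt hc
          · exact le_of_eq hp
        rcases hle with h' | ⟨h', _⟩
        · exact le_trans (le_of_lt h') hM1
        · exact le_trans (le_of_eq h') hM1
      have hsnap' : toLex (ofLex kv.2) ≤ toLex (ofLex t1.startTS) := hsnap
      rw [Prod.Lex.le_iff] at hsnap'; simp only [ofLex_toLex] at hsnap'
      have : (ofLex kv.2).2 = 0 := by
        rcases hsnap' with h' | ⟨h', h''⟩
        · omega
        · have := t1.start_snd; omega
      omega
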